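/- Let Z₁, …, Z_n be i.i.d. random variables with common distribution G on a measurable space 𝒵, let ξ : 𝒵 → ℝ be measurable with mean m := E_G[ξ] and variance σ² := Var_G(ξ) ∈ (0,∞), and let Δ := sup_{t ∈ ℝ} |P((∑ᵢ ξ(Zᵢ) − n·m)/(√n·σ) ≤ t) − Φ(t)|. Let α ∈ (0,1), a > 0, b > 0, and ε ∈ [0,1) be such that |m + b²/2| ≤ ε·b²/2. Then |P(∑_{i=1}^n ξ(Zᵢ) > log(1/α)) − (1 − Φ(log(1/α)/(√n·a) + √n·b²/(2a)))| ≤ Δ + (max{σ/a, a/σ} − 1)/√(2πe) + ε/((1−ε)·√(2πe)). -/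

import Mathlib

open MeasureTheory Real ProbabilityTheory

/-- The standard normal cumulative distribution function. -/
noncomputable def Phi (t : ℝ) : ℝ :=
  (Real.sqrt (2 * Real.pi))⁻¹ * ∫ x in Set.Iic t, Real.exp (-x ^ 2 / 2)

lemma gauss_integrable : Integrable (fun t : ℝ => Real.exp (-t ^ 2 / 2)) := by
  have h := integrable_exp_neg_mul_sq (show (0:ℝ) < 1/2 by norm_num)
  have key : (fun t : ℝ => Real.exp (-t ^ 2 / 2)) = fun t => Real.exp (-(1/2) * t ^ 2) := by
    funext t; ring_nf
  rw [key]; exact h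

lemma u_exp_le {u : ℝ} (hu : 0 ≤ u) : u * Real.exp (-u ^ 2 / 2) ≤ Real.exp (-(1:ℝ)/2) := by
  rcases eq_or_lt_of_le hu with h | h
  · rw [← h]; simp [Real.exp_nonneg, (Real.exp_pos _).le]
  · have hlog := Real.log_le_sub_one_of_pos h
    calc u * Real.exp (-u ^ 2 / 2) = Real.exp (Real.log u + -u ^ 2 / 2) := by
          rw [Real.exp_add, Real.exp_log h]
      _ ≤ Real.exp (-(1:ℝ)/2) := Real.exp_le_exp.mpr (by nlinarith [sq_nonneg (u - 1)])

lemma Phi_sub_eq {x y : ℝ} (hxy : x ≤ y) :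
    Phi y - Phi x = (Real.sqrt (2 * Real.pi))⁻¹ * ∫ t in Set.Ioc x y, Real.exp (-t ^ 2 / 2) := by
  unfold Phi
  rw [← mul_sub, intervalIntegral.integral_Iic_sub_Iic gauss_integrable.integrableOn
    gauss_integrable.integrableOn, intervalIntegral.integral_of_le hxy]

lemma Phi_bound {x y x0 : ℝ} (h0 : 0 ≤ x0) (hx : x0 ≤ x) (hy : x0 ≤ y) :
    |Phi y - Phi x| ≤ |y - x| * Real.exp (-x0 ^ 2 / 2) * (Real.sqrt (2 * Real.pi))⁻¹ := by
  have hsqrt : (0:ℝ) < Real.sqrt (2 * Real.pi) := Real.sqrt_pos.mpr (by positivity)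
  wlog hxy : x ≤ y generalizing x y
  · rw [abs_sub_comm, abs_sub_comm y x]; exact this hy hx (le_of_not_ge hxy)
  have key : ∀ z w : ℝ, x0 ≤ z → z ≤ w →
      Phi w - Phi z ≤ (w - z) * Real.exp (-x0 ^ 2 / 2) * (Real.sqrt (2 * Real.pi))⁻¹ := by
    intro z w hz hzw
    rw [Phi_sub_eq hzw]
    have hle : (∫ t in Set.Ioc z w, Real.exp (-t ^ 2 / 2)) ≤ (w - z) * Real.exp (-x0 ^ 2 / 2) := by
      have h1 : (∫ t in Set.Ioc z w, Real.exp (-t ^ 2 / 2)) ≤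
          ∫ _ in Set.Ioc z w, Real.exp (-x0 ^ 2 / 2) := by
        apply setIntegral_mono_on gauss_integrable.integrableOn
          (integrableOn_const measure_Ioc_lt_top.ne) measurableSet_Ioc
        intro t ht
        have := ht.1
        exact Real.exp_le_exp.mpr (by nlinarith)
      have h2 : (∫ _ in Set.Ioc z w, Real.exp (-x0 ^ 2 / 2)) = (w - z) * Real.exp (-x0 ^ 2 / 2) := by
        rw [setIntegral_const, measureReal_def, Real.volume_Ioc, ENNReal.toReal_ofReal (by linarith), smul_eq_mul]
      linarith [h1, h2.le, h2.ge]
    calc (Real.sqrt (2 * Real.pi))⁻¹ * ∫ t in Set.Ioc z w, Real.exp (-t ^ 2 / 2)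
        ≤ (Real.sqrt (2 * Real.pi))⁻¹ * ((w - z) * Real.exp (-x0 ^ 2 / 2)) := by
          exact mul_le_mul_of_nonneg_left hle (by positivity)
      _ = (w - z) * Real.exp (-x0 ^ 2 / 2) * (Real.sqrt (2 * Real.pi))⁻¹ := by ring
  have hnonneg : 0 ≤ Phi y - Phi x := by
    rw [Phi_sub_eq hxy]
    have : 0 ≤ ∫ t in Set.Ioc x y, Real.exp (-t ^ 2 / 2) :=
      setIntegral_nonneg measurableSet_Ioc fun t _ => (Real.exp_pos _).le
    positivity
  rw [abs_of_nonneg hnonneg, abs_of_nonneg (by linarith : (0:ℝ) ≤ y - x)]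
  exact key x y hx hxy

lemma sqrt_two_pi_e : Real.sqrt (2 * Real.pi * Real.exp 1) =
    Real.sqrt (2 * Real.pi) * Real.exp (1/2) := by
  rw [Real.sqrt_mul (by positivity), show Real.exp 1 = Real.exp (1/2) ^ 2 by
    rw [← Real.exp_nat_mul]; norm_num,
    Real.sqrt_sq (Real.exp_pos _).le]

set_option maxHeartbeats 1000000

/-- Nonasymptotic conditional form of Theorem 1: the miscoverage probability of universal
inference equals `1 − Φ(log(1/α)/(√n a) + √n b²/(2a))` up to the Berry–Esseen error `Δ` and
explicit Gaussian-comparison remainders. The i.i.d. sample `Z₁,…,Z_n ∼ G` is modelled by the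
product measure `Measure.pi (fun _ : Fin n => G)`. -/
theorem universal_inference_miscoverage_nonasymptotic
    {𝒵 : Type*} [MeasurableSpace 𝒵] (G : Measure 𝒵) [IsProbabilityMeasure G]
    (n : ℕ) (hn : 0 < n)
    (ξ : 𝒵 → ℝ) (hξ : Measurable ξ)
    (m σ : ℝ) (hm : m = ∫ z, ξ z ∂G)
    (hξ2 : Integrable (fun z => (ξ z) ^ 2) G)
    (hσ : σ ^ 2 = variance ξ G) (hσpos : 0 < σ)
    (Δ : ℝ)
    (hΔ : ∀ t : ℝ, |((Measure.pi fun _ : Fin n => G)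
        {ω | ((∑ i, ξ (ω i)) - n * m) / (Real.sqrt n * σ) ≤ t}).toReal - Phi t| ≤ Δ)
    (α a b ε : ℝ) (hα0 : 0 < α) (hα1 : α < 1) (ha : 0 < a) (hb : 0 < b)
    (hε0 : 0 ≤ ε) (hε1 : ε < 1)
    (hbias : |m + b ^ 2 / 2| ≤ ε * b ^ 2 / 2) :
    |((Measure.pi fun _ : Fin n => G) {ω | Real.log (1 / α) < ∑ i, ξ (ω i)}).toReal
        - (1 - Phi (Real.log (1 / α) / (Real.sqrt n * a)
            + Real.sqrt n * b ^ 2 / (2 * a)))| ≤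
      Δ + (max (σ / a) (a / σ) - 1) / Real.sqrt (2 * Real.pi * Real.exp 1)
        + ε / ((1 - ε) * Real.sqrt (2 * Real.pi * Real.exp 1)) := by
  have hn' : (0:ℝ) < n := Nat.cast_pos.mpr hn
  obtain ⟨s, hs, hns⟩ : ∃ s : ℝ, 0 < s ∧ Real.sqrt (n : ℝ) = s :=
    ⟨Real.sqrt n, Real.sqrt_pos.mpr hn', rfl⟩
  rw [hns] at hΔ ⊢
  have hnss : (n:ℝ) = s * s := by rw [← hns]; exact (Real.mul_self_sqrt hn'.le).symm
  have hεne : (1:ℝ) - ε ≠ 0 := by linarith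
  have hεpos : (0:ℝ) < 1 - ε := by linarith
  set L := Real.log (1 / α) with hLdef
  have hL : 0 ≤ L := Real.log_nonneg (by rw [le_div_iff₀ hα0]; linarith)
  have hc : 0 < s * σ := mul_pos hs hσpos
  have hsqrt2pi : (0:ℝ) < Real.sqrt (2 * Real.pi) := Real.sqrt_pos.mpr (by positivity)
  have hexpinv : (Real.sqrt (2 * Real.pi * Real.exp 1))⁻¹ =
      Real.exp (-(1:ℝ)/2) * (Real.sqrt (2 * Real.pi))⁻¹ := by
    rw [sqrt_two_pi_e, show Real.exp (-(1:ℝ)/2) = (Real.exp (1/2))⁻¹ by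
      rw [← Real.exp_neg]; norm_num]
    rw [mul_inv]; ring
  set d := s * b ^ 2 / (2 * σ) with hddef
  have hd0 : 0 ≤ d := by rw [hddef]; positivity
  set t1 := L / (s * σ) + d with ht1def
  set ts := (L - n * m) / (s * σ) with htsdef
  set th := L / (s * a) + s * b ^ 2 / (2 * a) with hthdef
  have ht1d : d ≤ t1 := by
    rw [ht1def]
    have : 0 ≤ L / (s * σ) := div_nonneg hL hc.le
    linarith
  have ht1pos : 0 ≤ t1 := le_trans hd0 ht1d
  have hthpos : 0 ≤ th := by rw [hthdef]; positivity
  have hts : t1 - ts = (n * (m + b ^ 2 / 2)) / (s * σ) := by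
    rw [ht1def, htsdef, hddef, hnss]; field_simp; ring
  have hdiff : |t1 - ts| ≤ ε * d := by
    rw [hts, abs_div, abs_of_pos hc, abs_mul, abs_of_pos hn', div_le_iff₀ hc]
    have h1 : (n:ℝ) * |m + b ^ 2 / 2| ≤ n * (ε * b ^ 2 / 2) :=
      mul_le_mul_of_nonneg_left hbias hn'.le
    have h2 : ε * d * (s * σ) = (n:ℝ) * (ε * b ^ 2 / 2) := by
      rw [hddef, hnss]; field_simp
    linarith
  have hts_ge : (1 - ε) * d ≤ ts := by
    have h := abs_le.mp hdiff
    nlinarith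
  have ht1_ge : (1 - ε) * d ≤ t1 := by nlinarith
  have hx0 : 0 ≤ (1 - ε) * d := mul_nonneg hεpos.le hd0
  -- C bound
  have hC : |Phi t1 - Phi ts| ≤ ε / ((1 - ε) * Real.sqrt (2 * Real.pi * Real.exp 1)) := by
    have hb1 := Phi_bound hx0 hts_ge ht1_ge
    have huexp := u_exp_le hx0
    have h3 : |t1 - ts| * Real.exp (-((1 - ε) * d) ^ 2 / 2) ≤
        ε / (1 - ε) * Real.exp (-(1:ℝ)/2) := by
      have h4 : |t1 - ts| * Real.exp (-((1 - ε) * d) ^ 2 / 2) ≤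
          ε * d * Real.exp (-((1 - ε) * d) ^ 2 / 2) :=
        mul_le_mul_of_nonneg_right hdiff (Real.exp_pos _).le
      have h5 : ε * d * Real.exp (-((1 - ε) * d) ^ 2 / 2) =
          ε / (1 - ε) * ((1 - ε) * d * Real.exp (-((1 - ε) * d) ^ 2 / 2)) := by
        field_simp
      rw [h5] at h4
      have h6 : ε / (1 - ε) * ((1 - ε) * d * Real.exp (-((1 - ε) * d) ^ 2 / 2)) ≤
          ε / (1 - ε) * Real.exp (-(1:ℝ)/2) :=
        mul_le_mul_of_nonneg_left huexp (div_nonneg hε0 hεpos.le)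
      linarith
    have h7 : ε / (1 - ε) * Real.exp (-(1:ℝ)/2) * (Real.sqrt (2 * Real.pi))⁻¹ =
        ε / ((1 - ε) * Real.sqrt (2 * Real.pi * Real.exp 1)) := by
      rw [div_eq_mul_inv ε ((1 - ε) * Real.sqrt (2 * Real.pi * Real.exp 1)), mul_inv, hexpinv]
      ring
    calc |Phi t1 - Phi ts| ≤ |t1 - ts| * Real.exp (-((1 - ε) * d) ^ 2 / 2) *
          (Real.sqrt (2 * Real.pi))⁻¹ := hb1
      _ ≤ ε / (1 - ε) * Real.exp (-(1:ℝ)/2) * (Real.sqrt (2 * Real.pi))⁻¹ :=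
          mul_le_mul_of_nonneg_right h3 (by positivity)
      _ = ε / ((1 - ε) * Real.sqrt (2 * Real.pi * Real.exp 1)) := h7
  -- D bound
  have hth_eq : th = σ / a * t1 := by
    rw [hthdef, ht1def, hddef]; field_simp
  have hD : |Phi th - Phi t1| ≤
      (max (σ / a) (a / σ) - 1) / Real.sqrt (2 * Real.pi * Real.exp 1) := by
    rcases le_total a σ with hcase | hcase
    · have hmax : max (σ / a) (a / σ) = σ / a :=
        max_eq_left (by
          have h1 : a / σ ≤ 1 := (div_le_one hσpos).mpr hcase
          have h2 : 1 ≤ σ / a := (one_le_div ha).mpr hcase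
          linarith)
      have h2 : 1 ≤ σ / a := (one_le_div ha).mpr hcase
      have hle : t1 ≤ th := by
        rw [hth_eq]; nlinarith [mul_nonneg (sub_nonneg.mpr h2) ht1pos]
      have hb1 := Phi_bound ht1pos le_rfl hle
      have hdiffval : |th - t1| = (σ / a - 1) * t1 := by
        rw [abs_of_nonneg (by linarith), hth_eq]; ring
      have huexp := u_exp_le ht1pos
      rw [hmax, div_eq_mul_inv, hexpinv]
      calc |Phi th - Phi t1| ≤ |th - t1| * Real.exp (-t1 ^ 2 / 2) *
            (Real.sqrt (2 * Real.pi))⁻¹ := hb1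
        _ = (σ / a - 1) * (t1 * Real.exp (-t1 ^ 2 / 2)) * (Real.sqrt (2 * Real.pi))⁻¹ := by
            rw [hdiffval]; ring
        _ ≤ (σ / a - 1) * Real.exp (-(1:ℝ)/2) * (Real.sqrt (2 * Real.pi))⁻¹ := by
            apply mul_le_mul_of_nonneg_right _ (by positivity)
            apply mul_le_mul_of_nonneg_left huexp
            linarith
        _ = (σ / a - 1) * (Real.exp (-(1:ℝ)/2) * (Real.sqrt (2 * Real.pi))⁻¹) := by ring
    · have hmax : max (σ / a) (a / σ) = a / σ :=
        max_eq_right (by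
          have h1 : σ / a ≤ 1 := (div_le_one ha).mpr hcase
          have h2 : 1 ≤ a / σ := (one_le_div hσpos).mpr hcase
          linarith)
      have h1 : σ / a ≤ 1 := (div_le_one ha).mpr hcase
      have h2 : 1 ≤ a / σ := (one_le_div hσpos).mpr hcase
      have hle : th ≤ t1 := by
        rw [hth_eq]; nlinarith [mul_nonneg (sub_nonneg.mpr h1) ht1pos]
      have hb1 := Phi_bound hthpos hle le_rfl
      have ht1th : t1 = a / σ * th := by
        rw [hth_eq]; field_simp
      have hdiffval : |th - t1| = (a / σ - 1) * th := by
        rw [abs_of_nonpos (by linarith), ht1th]; ring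
      have huexp := u_exp_le hthpos
      rw [hmax, div_eq_mul_inv, hexpinv]
      calc |Phi th - Phi t1| ≤ |th - t1| * Real.exp (-th ^ 2 / 2) *
            (Real.sqrt (2 * Real.pi))⁻¹ := hb1
        _ = (a / σ - 1) * (th * Real.exp (-th ^ 2 / 2)) * (Real.sqrt (2 * Real.pi))⁻¹ := by
            rw [hdiffval]; ring
        _ ≤ (a / σ - 1) * Real.exp (-(1:ℝ)/2) * (Real.sqrt (2 * Real.pi))⁻¹ := by
            apply mul_le_mul_of_nonneg_right _ (by positivity)
            apply mul_le_mul_of_nonneg_left huexp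
            linarith
        _ = (a / σ - 1) * (Real.exp (-(1:ℝ)/2) * (Real.sqrt (2 * Real.pi))⁻¹) := by ring
  -- probability manipulations
  set μ := Measure.pi fun _ : Fin n => G with hμ
  have hSmeas : Measurable fun ω : Fin n → 𝒵 => ∑ i, ξ (ω i) :=
    Finset.measurable_sum Finset.univ fun i _ => hξ.comp (measurable_pi_apply i)
  have hmeasset : MeasurableSet {ω : Fin n → 𝒵 | ∑ i, ξ (ω i) ≤ L} :=
    measurableSet_le hSmeas measurable_const
  have hset1 : {ω : Fin n → 𝒵 | L < ∑ i, ξ (ω i)} = {ω | ∑ i, ξ (ω i) ≤ L}ᶜ := by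
    ext ω; simp [not_le]
  have h1 : (μ {ω | L < ∑ i, ξ (ω i)}).toReal = 1 - (μ {ω | ∑ i, ξ (ω i) ≤ L}).toReal := by
    rw [hset1, measure_compl hmeasset (measure_ne_top _ _), measure_univ,
      ENNReal.toReal_sub_of_le prob_le_one ENNReal.one_ne_top, ENNReal.toReal_one]
  have hset2 : {ω : Fin n → 𝒵 | ((∑ i, ξ (ω i)) - n * m) / (s * σ) ≤ ts} =
      {ω | ∑ i, ξ (ω i) ≤ L} := by
    ext ω
    simp only [Set.mem_setOf_eq, htsdef]
    rw [div_le_div_iff_of_pos_right hc, sub_le_sub_iff_right]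
  have hB : |(μ {ω | ∑ i, ξ (ω i) ≤ L}).toReal - Phi ts| ≤ Δ := by
    have h := hΔ ts
    rwa [hset2] at h
  rw [h1]
  have heq : 1 - (μ {ω | ∑ i, ξ (ω i) ≤ L}).toReal - (1 - Phi th) =
      Phi th - (μ {ω | ∑ i, ξ (ω i) ≤ L}).toReal := by ring
  rw [heq]
  have htri : |Phi th - (μ {ω | ∑ i, ξ (ω i) ≤ L}).toReal| ≤
      |Phi th - Phi t1| + |Phi t1 - Phi ts| +
        |Phi ts - (μ {ω | ∑ i, ξ (ω i) ≤ L}).toReal| := by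
    have h8 := abs_sub_le (Phi th) (Phi t1) (Phi ts)
    have h9 := abs_sub_le (Phi th) (Phi ts) ((μ {ω | ∑ i, ξ (ω i) ≤ L}).toReal)
    linarith
  have hB' : |Phi ts - (μ {ω | ∑ i, ξ (ω i) ≤ L}).toReal| ≤ Δ := by
    rwa [abs_sub_comm]
  linarith
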